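/- Let ω be a connection 1-form on a principal bundle P with curvature Ω. If U is a horizontal vector field and V is a vertical vector field on P, then the Lie derivative satisfies (L_U ω)(V) = 0. Consequently, for horizontal vector fields U_k,…,U_1,X,Y, one has U_k⋯U_1 Ω(X,Y) = -ω(v[U_k, v[U_{k-1}, …, v[X,Y]…]]). -/

import Mathlib

/-- For a connection 1-form `ω` with curvature `Ω`, if `U` is horizontal and
`V` is vertical then `(L_U ω)(V) = 0`; consequently for horizontal fields
`U_k, …, U_1, X, Y` one has `U_k ⋯ U_1 Ω(X,Y) = -ω(v[U_k, v[U_{k-1}, …, v[X,Y]…]])`.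

Vector fields are modelled abstractly as a real Lie algebra `VF`; `W` is the Lie algebra
of Lie-algebra-valued functions on the bundle, `act X` is differentiation along `X`,
`horiz`/`vert` are the horizontal/vertical predicates, `v`/`hproj` the vertical and
horizontal projections, and `Lω U V` is the Lie derivative `(L_U ω)(V)`. -/
theorem lie_derivative_vanishes_and_iterated_curvature_formula
    (VF W : Type*) [LieRing VF] [LieAlgebra ℝ VF] [LieRing W] [LieAlgebra ℝ W]
    (ω : VF →ₗ[ℝ] W) (Ω dω : VF → VF → W) (act : VF → W →ₗ[ℝ] W)
    (horiz vert : VF → Prop) (v hproj : VF → VF) (Lω : VF → VF → W)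
    -- Lie derivative of the 1-form ω evaluated on a field
    (hLie : ∀ U V, Lω U V = act U (ω V) - ω ⁅U, V⁆)
    -- structural equation Ω = dω + ω∧ω
    (hstruct : ∀ X Y, Ω X Y = dω X Y + ⁅ω X, ω Y⁆)
    -- intrinsic formula for dω
    (hdω : ∀ X Y, dω X Y = act X (ω Y) - act Y (ω X) - ω ⁅X, Y⁆)
    -- ω is a vertical form
    (hω_horiz : ∀ X, horiz X → ω X = 0)
    (hω_vproj : ∀ Z, ω (v Z) = ω Z)
    -- decomposition into horizontal and vertical parts
    (hdecomp : ∀ Z, hproj Z + v Z = Z)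
    (h_hproj : ∀ Z, horiz (hproj Z)) (h_vproj : ∀ Z, vert (v Z))
    -- Ω is a horizontal form
    (hΩ_horiz : ∀ X Z, vert Z → Ω X Z = 0 ∧ Ω Z X = 0) :
    (∀ U V, horiz U → vert V → Lω U V = 0) ∧
    (∀ (X Y : VF) (Us : List VF), horiz X → horiz Y → (∀ U ∈ Us, horiz U) →
      Us.foldr (fun U w => act U w) (Ω X Y)
        = -ω (Us.foldr (fun U Z => v ⁅U, Z⁆) (v ⁅X, Y⁆))) := by
  -- Key: for U horizontal and Z vertical, Ω U Z = 0 and ω U = 0 force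
  -- act U (ω Z) = ω ⁅U, Z⁆.
  have key : ∀ U Z, horiz U → vert Z → act U (ω Z) = ω ⁅U, Z⁆ := by
    intro U Z hU hZ
    have h1 : Ω U Z = 0 := (hΩ_horiz U Z hZ).1
    have h2 : ω U = 0 := hω_horiz U hU
    have := hstruct U Z
    rw [h1, hdω, h2, map_zero] at this
    simp only [zero_lie, lie_zero, add_zero, sub_zero] at this
    exact sub_eq_zero.mp this.symm
  constructor
  · intro U V hU hV
    rw [hLie, key U V hU hV, sub_self]
  · intro X Y Us hX hY hUs
    induction Us with
    | nil =>
        simp only [List.foldr_nil]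
        have h2 : ω Y = 0 := hω_horiz Y hY
        have h3 : ω X = 0 := hω_horiz X hX
        rw [hstruct, hdω, h2, h3, map_zero, map_zero, zero_lie, add_zero,
          hω_vproj]
        abel
    | cons U Us ih =>
        simp only [List.foldr_cons]
        have hU : horiz U := hUs U List.mem_cons_self
        have hUs' : ∀ W ∈ Us, horiz W := fun W hW => hUs W (List.mem_cons_of_mem U hW)
        rw [ih hUs', map_neg]
        have hvert : vert (Us.foldr (fun U Z => v ⁅U, Z⁆) (v ⁅X, Y⁆)) := by
          cases Us with
          | nil => exact h_vproj _
          | cons a l => exact h_vproj _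
        rw [key U _ hU hvert, hω_vproj]
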